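/- arXiv:1601.06158 — 3 statements merged into one kernel-verified Lean document; each statement's English description precedes it below -/
import Mathlib

section
/- For n ≥ k ≥ 0, the number of paths from (0,0) to (n,k) in the Catalan–Schröder lattice L_CS equals the coefficient of x^k in F(x)·C(x)^{n-k}, where F(x) is the generating function for paths to diagonal points (n,n) in L_CS and C(x) is the Catalan generating function. Concretely: (number of paths to (n,k)) = Σ_{m=0}^{k} f_m · [x^{k-m}] C(x)^{n-k}. -/
open Finset PowerSeries

/-- Large Schröder numbers. -/
def schroeder : ℕ → ℕ
  | 0 => 1
  | n + 1 => schroeder n + ∑ i : Fin (n + 1), schroeder i * schroeder (n - i)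

/-- The points visited by a path (a list of steps) starting at (0,0). -/
def pts (l : List (ℤ × ℤ)) : List (ℤ × ℤ) :=
  l.scanl (fun p s => (p.1 + s.1, p.2 + s.2)) (0, 0)

/-- The endpoint of a path starting at (0,0). -/
def endPt (l : List (ℤ × ℤ)) : ℤ × ℤ :=
  ((l.map Prod.fst).sum, (l.map Prod.snd).sum)

/-- All steps are unit steps (1,0) or (0,1). -/
def unitSteps (l : List (ℤ × ℤ)) : Prop := ∀ s ∈ l, s = (1, 0) ∨ s = (0, 1)

/-- All steps are (1,0), (0,1) or (1,1). -/
def schSteps (l : List (ℤ × ℤ)) : Prop := ∀ s ∈ l, s = (1, 0) ∨ s = (0, 1) ∨ s = (1, 1)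

/-- The path stays weakly below the diagonal y = x. -/
def weaklyBelow (l : List (ℤ × ℤ)) : Prop := ∀ p ∈ pts l, p.2 ≤ p.1

/-- The path stays strictly below the diagonal except at its start (0,0). -/
def strictBelowAfterStart (l : List (ℤ × ℤ)) : Prop :=
  ∀ p ∈ pts l, p ≠ (0, 0) → p.2 < p.1

/-- Validity of a path starting at point `p` in a lattice where steps (1,0) and (0,1)
are allowed everywhere and the diagonal step (1,1) is allowed exactly from points
satisfying `D`. -/
def okFrom (D : ℤ × ℤ → Prop) : ℤ × ℤ → List (ℤ × ℤ) → Prop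
  | _, [] => True
  | p, s :: l => (s = (1, 0) ∨ s = (0, 1) ∨ (s = (1, 1) ∧ D p)) ∧
      okFrom D (p.1 + s.1, p.2 + s.2) l

/-- Paths from (0,0) to (n,k) in the Catalan–Schröder lattice L_CS:
diagonal steps allowed from points (a,b) with b ≥ a. -/
def LCS (n k : ℕ) : Set (List (ℤ × ℤ)) :=
  {l | okFrom (fun p => p.1 ≤ p.2) (0, 0) l ∧ endPt l = ((n : ℤ), (k : ℤ))}

/-- Paths from (0,0) to (n,k) in the lattice L*_CS:
diagonal steps allowed only from points (a,b) with b > a. -/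
def LCSstar (n k : ℕ) : Set (List (ℤ × ℤ)) :=
  {l | okFrom (fun p => p.1 < p.2) (0, 0) l ∧ endPt l = ((n : ℤ), (k : ℤ))}

/-- Weakly subdiagonal unit-step paths from (0,0) to (n,k). -/
def CPath (n k : ℕ) : Set (List (ℤ × ℤ)) :=
  {l | unitSteps l ∧ endPt l = ((n : ℤ), (k : ℤ)) ∧ weaklyBelow l}

/-- Weakly subdiagonal paths from (0,0) to (n,k) with steps (1,0),(0,1),(1,1). -/
def SPath (n k : ℕ) : Set (List (ℤ × ℤ)) :=
  {l | schSteps l ∧ endPt l = ((n : ℤ), (k : ℤ)) ∧ weaklyBelow l}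

/-- Number of paths from (0,0) to (n,n) in L_CS. -/
noncomputable def fCS (n : ℕ) : ℕ := Nat.card ↥(LCS n n)

/-- Number of paths from (0,0) to (n,n) in L*_CS. -/
noncomputable def fCSstar (n : ℕ) : ℕ := Nat.card ↥(LCSstar n n)

/-- Generating function of the Catalan numbers. -/
noncomputable def catalanGF : PowerSeries ℤ := PowerSeries.mk fun n => (catalan n : ℤ)

/-- Generating function of the large Schröder numbers. -/
noncomputable def schroederGF : PowerSeries ℤ := PowerSeries.mk fun n => (schroeder n : ℤ)

/-- Generating function F(x) of diagonal path counts in L_CS. -/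
noncomputable def FGF : PowerSeries ℤ := PowerSeries.mk fun n => (fCS n : ℤ)

/-- Generating function F*(x) of diagonal path counts in L*_CS. -/
noncomputable def FstarGF : PowerSeries ℤ := PowerSeries.mk fun n => (fCSstar n : ℤ)

/-- Substitution x ↦ x² in a formal power series: g(x²). -/
noncomputable def subSq (g : PowerSeries ℤ) : PowerSeries ℤ :=
  PowerSeries.mk fun n => if 2 ∣ n then PowerSeries.coeff (n / 2) g else 0

/-- Substitution x ↦ x³ in a formal power series: g(x³). -/
noncomputable def subCube (g : PowerSeries ℤ) : PowerSeries ℤ :=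
  PowerSeries.mk fun n => if 3 ∣ n then PowerSeries.coeff (n / 3) g else 0



lemma endPt_cons (s : ℤ × ℤ) (l : List (ℤ × ℤ)) :
    endPt (s :: l) = (s.1 + (endPt l).1, s.2 + (endPt l).2) := by simp [endPt]

lemma endPt_append_singleton (l : List (ℤ × ℤ)) (s : ℤ × ℤ) :
    endPt (l ++ [s]) = ((endPt l).1 + s.1, (endPt l).2 + s.2) := by simp [endPt]

lemma okFrom_cons (D : ℤ × ℤ → Prop) (p : ℤ × ℤ) (s : ℤ × ℤ) (l : List (ℤ × ℤ)) :
    okFrom D p (s :: l) ↔ (s = (1, 0) ∨ s = (0, 1) ∨ (s = (1, 1) ∧ D p)) ∧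
      okFrom D (p.1 + s.1, p.2 + s.2) l := Iff.rfl

lemma okFrom_append_singleton (D : ℤ × ℤ → Prop) (p : ℤ × ℤ) (l : List (ℤ × ℤ)) (s : ℤ × ℤ) :
    okFrom D p (l ++ [s]) ↔ okFrom D p l ∧
      (s = (1, 0) ∨ s = (0, 1) ∨ (s = (1, 1) ∧ D (p.1 + (endPt l).1, p.2 + (endPt l).2))) := by
  induction l generalizing p with
  | nil => simp [okFrom, endPt]
  | cons a l ih =>
    simp only [List.cons_append, okFrom_cons, ih, endPt_cons, and_assoc]
    constructor
    · rintro ⟨h1, h2, h3⟩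
      refine ⟨h1, h2, ?_⟩
      rcases h3 with h | h | ⟨h, hD⟩
      · exact Or.inl h
      · exact Or.inr (Or.inl h)
      · exact Or.inr (Or.inr ⟨h, by convert hD using 2 <;> ring⟩)
    · rintro ⟨h1, h2, h3⟩
      refine ⟨h1, h2, ?_⟩
      rcases h3 with h | h | ⟨h, hD⟩
      · exact Or.inl h
      · exact Or.inr (Or.inl h)
      · exact Or.inr (Or.inr ⟨h, by convert hD using 2 <;> ring⟩)

lemma okFrom_steps (D : ℤ × ℤ → Prop) (p : ℤ × ℤ) (l : List (ℤ × ℤ)) (h : okFrom D p l) :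
    ∀ s ∈ l, s = (1, 0) ∨ s = (0, 1) ∨ s = (1, 1) := by
  induction l generalizing p with
  | nil => simp
  | cons a l ih =>
    obtain ⟨h1, h2⟩ := h
    intro s hs
    rcases List.mem_cons.mp hs with rfl | hs
    · tauto
    · exact ih _ h2 s hs

lemma length_le_sum (l : List (ℤ × ℤ)) (h : ∀ s ∈ l, s = (1, 0) ∨ s = (0, 1) ∨ s = (1, 1)) :
    (l.length : ℤ) ≤ (endPt l).1 + (endPt l).2 := by
  induction l with
  | nil => simp [endPt]
  | cons a l ih =>
    have ha := h a (by simp)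
    have hl := ih (fun s hs => h s (by simp [hs]))
    rw [endPt_cons]
    simp only [List.length_cons]
    rcases ha with rfl | rfl | rfl <;> push_cast <;> omega

lemma endPt_snd_nonneg (l : List (ℤ × ℤ)) (h : ∀ s ∈ l, s = (1, 0) ∨ s = (0, 1) ∨ s = (1, 1)) :
    0 ≤ (endPt l).2 := by
  induction l with
  | nil => simp [endPt]
  | cons a l ih =>
    have ha := h a (by simp)
    have hl := ih (fun s hs => h s (by simp [hs]))
    rw [endPt_cons]
    rcases ha with rfl | rfl | rfl <;> simp <;> omega

lemma eq_replicate_of_snd_zero (l : List (ℤ × ℤ))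
    (h : ∀ s ∈ l, s = (1, 0) ∨ s = (0, 1) ∨ s = (1, 1)) (h0 : (endPt l).2 = 0) :
    l = List.replicate l.length (1, 0) := by
  induction l with
  | nil => simp
  | cons a l ih =>
    have ha := h a (by simp)
    have hsteps : ∀ s ∈ l, s = (1, 0) ∨ s = (0, 1) ∨ s = (1, 1) :=
      fun s hs => h s (by simp [hs])
    have hnn := endPt_snd_nonneg l hsteps
    rw [endPt_cons] at h0
    have ha2 : a.2 = 0 ∧ (endPt l).2 = 0 := by
      rcases ha with rfl | rfl | rfl <;> simp at h0 ⊢ <;> omega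
    have : a = (1, 0) := by
      rcases ha with rfl | rfl | rfl
      · rfl
      · simp at ha2
      · simp at ha2
    subst this
    rw [List.length_cons, List.replicate_succ]
    exact congrArg _ (ih hsteps ha2.2)

lemma endPt_replicate (m : ℕ) : endPt (List.replicate m ((1:ℤ), (0:ℤ))) = ((m : ℤ), 0) := by
  simp [endPt, List.sum_replicate]

lemma okFrom_replicate (D : ℤ × ℤ → Prop) (p : ℤ × ℤ) (m : ℕ) :
    okFrom D p (List.replicate m ((1:ℤ), (0:ℤ))) := by
  induction m generalizing p with
  | zero => trivial
  | succ m ih => exact ⟨Or.inl rfl, ih _⟩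


lemma LCS_zero (n : ℕ) : LCS n 0 = {List.replicate n ((1:ℤ), (0:ℤ))} := by
  ext l
  constructor
  · rintro ⟨hok, hend⟩
    have hsteps := okFrom_steps _ _ _ hok
    have h0 : (endPt l).2 = 0 := by rw [hend]; rfl
    have hrep := eq_replicate_of_snd_zero l hsteps h0
    have h1 : (endPt l).1 = (n : ℤ) := by rw [hend]
    rw [hrep, endPt_replicate] at h1
    simp at h1
    have : l.length = n := by exact_mod_cast h1
    rw [this] at hrep
    exact hrep
  · rintro rfl
    exact ⟨okFrom_replicate _ _ _, by rw [endPt_replicate]; norm_num⟩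

lemma nat_card_singleton_dup {α : Type*} (a : α) : Nat.card ↥({a} : Set α) = 1 := by
  rw [Nat.card_coe_set_eq, Set.ncard_singleton]

lemma LCS_finite (n k : ℕ) : (LCS n k).Finite := by
  classical
  set T : Finset (ℤ × ℤ) := {(1, 0), (0, 1), (1, 1)} with hT
  have hsub : LCS n k ⊆
      (fun l : List ↥(T : Set (ℤ × ℤ)) => l.map Subtype.val) ''
        {l | l.length ≤ n + k} := by
    rintro l ⟨hok, hend⟩
    have hsteps := okFrom_steps _ _ _ hok
    have hmem : ∀ s ∈ l, s ∈ (T : Set (ℤ × ℤ)) := by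
      intro s hs
      rcases hsteps s hs with rfl | rfl | rfl <;> simp [hT]
    have hlen : l.length ≤ n + k := by
      have h2 := length_le_sum l hsteps
      rw [hend] at h2
      simp at h2
      omega
    refine ⟨l.attach.map (fun x => ⟨x.1, hmem x.1 x.2⟩), by simpa using hlen, ?_⟩
    simp only [List.map_map]
    exact List.attach_map_subtype_val l
  exact Set.Finite.subset ((List.finite_length_le _ _).image _) hsub

lemma LCS_decomp (n k : ℕ) (hk : 0 < k) (hkn : k < n) :
    LCS n k = ((fun l => l ++ [((1:ℤ), (0:ℤ))]) '' LCS (n - 1) k) ∪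
      ((fun l => l ++ [((0:ℤ), (1:ℤ))]) '' LCS n (k - 1)) := by
  have hn1 : ((n - 1 : ℕ) : ℤ) = (n : ℤ) - 1 := by omega
  have hk1 : ((k - 1 : ℕ) : ℤ) = (k : ℤ) - 1 := by omega
  ext l
  constructor
  · rintro ⟨hok, hend⟩
    have hne : l ≠ [] := by
      rintro rfl
      have : ((n : ℤ), (k : ℤ)) = ((0 : ℤ), (0 : ℤ)) := by
        rw [← hend]; rfl
      simp at this
      omega
    obtain ⟨l', s, rfl⟩ : ∃ l' s, l = l' ++ [s] :=
      ⟨l.dropLast, l.getLast hne, (List.dropLast_append_getLast hne).symm⟩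
    rw [okFrom_append_singleton] at hok
    obtain ⟨hok', hstep⟩ := hok
    rw [endPt_append_singleton, Prod.mk.injEq] at hend
    obtain ⟨he1, he2⟩ := hend
    rcases hstep with rfl | rfl | ⟨rfl, hD⟩
    · left
      refine ⟨l', ⟨hok', ?_⟩, rfl⟩
      have hpt : endPt l' = ((endPt l').1, (endPt l').2) := rfl
      rw [hpt, Prod.mk.injEq]
      simp at he1 he2
      omega
    · right
      refine ⟨l', ⟨hok', ?_⟩, rfl⟩
      have hpt : endPt l' = ((endPt l').1, (endPt l').2) := rfl
      rw [hpt, Prod.mk.injEq]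
      simp at he1 he2
      omega
    · exfalso
      simp at he1 he2 hD
      omega
  · rintro (⟨l', ⟨hok, hend⟩, rfl⟩ | ⟨l', ⟨hok, hend⟩, rfl⟩) <;>
      refine ⟨(okFrom_append_singleton _ _ _ _).mpr ⟨hok, by tauto⟩, ?_⟩ <;>
      rw [endPt_append_singleton, hend] <;>
      · simp only [Prod.mk.injEq, hn1, hk1]
        norm_num


lemma nat_card_singleton {α : Type*} (a : α) : Nat.card ↥({a} : Set α) = 1 := by
  rw [Nat.card_coe_set_eq, Set.ncard_singleton]

lemma card_LCS_rec (n k : ℕ) (hk : 0 < k) (hkn : k < n) :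
    Nat.card ↥(LCS n k) = Nat.card ↥(LCS (n - 1) k) + Nat.card ↥(LCS n (k - 1)) := by
  have hdisj : Disjoint ((fun l => l ++ [((1:ℤ), (0:ℤ))]) '' LCS (n - 1) k)
      ((fun l => l ++ [((0:ℤ), (1:ℤ))]) '' LCS n (k - 1)) := by
    rw [Set.disjoint_left]
    rintro l ⟨a, _, rfl⟩ ⟨b, _, hb⟩
    have h := congrArg List.getLast? hb
    simp at h
  rw [Nat.card_coe_set_eq, Nat.card_coe_set_eq, Nat.card_coe_set_eq,
    LCS_decomp n k hk hkn,
    Set.ncard_union_eq hdisj ((LCS_finite _ _).image _) ((LCS_finite _ _).image _),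
    Set.ncard_image_of_injective _ (List.append_left_injective _),
    Set.ncard_image_of_injective _ (List.append_left_injective _)]

lemma catalanGF_eq : catalanGF = 1 + X * catalanGF ^ 2 := by
  ext n
  cases n with
  | zero => simp [catalanGF]
  | succ n =>
    rw [map_add, PowerSeries.coeff_one, if_neg (Nat.succ_ne_zero n), coeff_succ_X_mul, sq,
      PowerSeries.coeff_mul]
    simp only [catalanGF, coeff_mk]
    rw [catalan_succ']
    push_cast
    ring

lemma key (r : ℕ) :
    FGF * catalanGF ^ (r + 1) = FGF * catalanGF ^ r + X * (FGF * catalanGF ^ (r + 2)) := by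
  have h : catalanGF ^ (r + 1) = catalanGF ^ r * (1 + X * catalanGF ^ 2) := by
    rw [← catalanGF_eq, pow_succ]
  rw [h]
  ring

lemma fCS_zero : fCS 0 = 1 := by
  rw [fCS, LCS_zero 0]
  simpa using nat_card_singleton ([] : List (ℤ × ℤ))

lemma coeff_zero_FC (r : ℕ) : (coeff 0) (FGF * catalanGF ^ r) = 1 := by
  rw [coeff_zero_eq_constantCoeff, map_mul, map_pow]
  have h1 : constantCoeff FGF = 1 := by
    simp [FGF, ← coeff_zero_eq_constantCoeff, fCS_zero]
  have h2 : constantCoeff catalanGF = 1 := by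
    simp [catalanGF, ← coeff_zero_eq_constantCoeff]
  rw [h1, h2, one_pow, one_mul]

lemma main_aux (N : ℕ) : ∀ n k, n + k ≤ N → k ≤ n →
    (Nat.card ↥(LCS n k) : ℤ) = coeff k (FGF * catalanGF ^ (n - k)) := by
  induction N with
  | zero =>
    intro n k hN hkn
    obtain rfl : n = 0 := by omega
    obtain rfl : k = 0 := by omega
    rw [coeff_zero_FC, LCS_zero 0, nat_card_singleton]
    norm_num
  | succ N ih =>
    intro n k hN hkn
    rcases eq_or_lt_of_le hkn with rfl | hlt
    · rw [Nat.sub_self, pow_zero, mul_one]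
      simp [FGF, fCS]
    rcases Nat.eq_zero_or_pos k with rfl | hkpos
    · rw [coeff_zero_FC, LCS_zero n, nat_card_singleton]
      norm_num
    · rw [card_LCS_rec n k hkpos hlt]
      push_cast
      rw [ih (n - 1) k (by omega) (by omega), ih n (k - 1) (by omega) (by omega)]
      obtain ⟨r, hr⟩ : ∃ r, n - k = r + 1 := ⟨n - k - 1, by omega⟩
      obtain ⟨k', rfl⟩ : ∃ k', k = k' + 1 := ⟨k - 1, by omega⟩
      have h1 : n - 1 - (k' + 1) = r := by omega
      have h2 : n - (k' + 1 - 1) = r + 2 := by omega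
      rw [hr, h1, h2, key r, map_add, Nat.add_sub_cancel, coeff_succ_X_mul]



/-- for n ≥ k, the number of paths to (n,k) in L_CS equals
Σ_{m=0}^{k} f_m · [x^{k-m}] C(x)^{n-k}. -/
theorem LCS_count (n k : ℕ) (h : k ≤ n) :
    (Nat.card ↥(LCS n k) : ℤ) =
      ∑ m ∈ Finset.range (k + 1),
        (fCS m : ℤ) * PowerSeries.coeff (k - m) (catalanGF ^ (n - k)) := by
  have hs : ∑ m ∈ Finset.range (k + 1),
      (fCS m : ℤ) * PowerSeries.coeff (k - m) (catalanGF ^ (n - k))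
      = coeff k (FGF * catalanGF ^ (n - k)) := by
    rw [PowerSeries.coeff_mul, Finset.Nat.sum_antidiagonal_eq_sum_range_succ_mk]
    simp [FGF]
  rw [hs, main_aux (n + k) n k le_rfl h]
end

section
/- Any path from (0,0) to (n,k) with n > k in the lattice L_CS decomposes uniquely as a path from (0,0) to (m,m) for some 0 ≤ m ≤ k followed by a path from (m,m) to (n,k) that does not revisit the diagonal y = x; consequently the count of paths to (n,k) equals Σ_{m=0}^{k} f_m · d_{n-m, k-m}, where f_m is the number of paths to (m,m) and d_{p,q} is the number of paths from (0,0) to (p,q) staying strictly below the diagonal after the start. -/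
open Finset PowerSeries

/-- Number of unit-step paths from (0,0) to (p,q) strictly below the diagonal
after the start. -/
noncomputable def dCount (p q : ℕ) : ℕ :=
  Nat.card ↥{l : List (ℤ × ℤ) |
    unitSteps l ∧ endPt l = ((p : ℤ), (q : ℤ)) ∧ strictBelowAfterStart l}

section Aux

lemma endPt_nil : endPt ([] : List (ℤ × ℤ)) = (0, 0) := rfl

lemma endPt_append (a b : List (ℤ × ℤ)) :
    endPt (a ++ b) = ((endPt a).1 + (endPt b).1, (endPt a).2 + (endPt b).2) := by
  simp [endPt]

lemma okFrom_append {D : ℤ × ℤ → Prop} {p : ℤ × ℤ} {a b : List (ℤ × ℤ)} :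
    okFrom D p (a ++ b) ↔
      okFrom D p a ∧ okFrom D (p.1 + (endPt a).1, p.2 + (endPt a).2) b := by
  induction a generalizing p with
  | nil => simp [okFrom, endPt_nil]
  | cons s a ih =>
    show (_ ∧ okFrom D _ (a ++ b)) ↔ _
    rw [ih, endPt_cons]
    simp [okFrom, and_assoc, add_assoc]

lemma okFrom_schSteps {D : ℤ × ℤ → Prop} : ∀ {l : List (ℤ × ℤ)} {p : ℤ × ℤ},
    okFrom D p l → schSteps l
  | [], _, _ => by intro s hs; simp at hs
  | s :: l, p, h => by
    intro t ht
    rcases List.mem_cons.1 ht with rfl | ht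
    · rcases h.1 with h1 | h1 | h1
      · exact Or.inl h1
      · exact Or.inr (Or.inl h1)
      · exact Or.inr (Or.inr h1.1)
    · exact okFrom_schSteps h.2 t ht

lemma unitSteps_okFrom {D : ℤ × ℤ → Prop} : ∀ {l : List (ℤ × ℤ)} (p : ℤ × ℤ),
    unitSteps l → okFrom D p l
  | [], _, _ => trivial
  | s :: l, p, h => by
    refine ⟨?_, unitSteps_okFrom _ fun t ht => h t (List.mem_cons_of_mem _ ht)⟩
    rcases h s (List.mem_cons_self) with h1 | h1
    · exact Or.inl h1
    · exact Or.inr (Or.inl h1)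

end Aux

section Aux2

lemma scanl_shift (l : List (ℤ × ℤ)) : ∀ q : ℤ × ℤ,
    l.scanl (fun p s => (p.1 + s.1, p.2 + s.2)) q
      = (pts l).map (fun p => (q.1 + p.1, q.2 + p.2)) := by
  induction l with
  | nil => intro q; simp [pts]
  | cons s l ih =>
    intro q
    simp only [pts, List.scanl_cons, List.map_cons]
    rw [ih, ih ((0 : ℤ) + s.1, (0 : ℤ) + s.2)]
    simp only [List.singleton_append, List.map_cons, List.map_map]
    congr 1
    · simp
    · congr 1
      funext p
      simp [Prod.ext_iff]
      constructor <;> ring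

lemma pts_cons (s : ℤ × ℤ) (l : List (ℤ × ℤ)) :
    pts (s :: l) = (0, 0) :: (pts l).map (fun p => (s.1 + p.1, s.2 + p.2)) := by
  simp only [pts, List.scanl_cons]
  rw [scanl_shift]
  simp
  rfl

lemma mem_pts {l : List (ℤ × ℤ)} {p : ℤ × ℤ} :
    p ∈ pts l ↔ ∃ i, i ≤ l.length ∧ endPt (l.take i) = p := by
  induction l generalizing p with
  | nil =>
    simp only [pts, List.scanl_nil, List.mem_singleton, List.length_nil]
    constructor
    · rintro rfl; exact ⟨0, le_refl _, rfl⟩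
    · rintro ⟨i, _, rfl⟩; simp [endPt]
  | cons s l ih =>
    rw [pts_cons]
    simp only [List.mem_cons, List.mem_map, ih]
    constructor
    · rintro (rfl | ⟨q, ⟨i, hi, rfl⟩, rfl⟩)
      · exact ⟨0, by simp, rfl⟩
      · exact ⟨i + 1, by simpa using hi, by simp [endPt_cons]⟩
    · rintro ⟨i, hi, rfl⟩
      cases i with
      | zero => exact Or.inl rfl
      | succ j =>
        refine Or.inr ⟨endPt (l.take j), ⟨j, by simpa using hi, rfl⟩, ?_⟩
        simp [endPt_cons]

lemma unit_schSteps {l : List (ℤ × ℤ)} (h : unitSteps l) : schSteps l := by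
  intro s hs
  rcases h s hs with h1 | h1
  · exact Or.inl h1
  · exact Or.inr (Or.inl h1)

lemma endPt_nonneg {l : List (ℤ × ℤ)} (h : schSteps l) :
    0 ≤ (endPt l).1 ∧ 0 ≤ (endPt l).2 := by
  induction l with
  | nil => simp [endPt_nil]
  | cons s l ih =>
    have hs := h s (List.mem_cons_self)
    have ih' := ih fun t ht => h t (List.mem_cons_of_mem _ ht)
    rw [endPt_cons]
    rcases hs with rfl | rfl | rfl <;> constructor <;> simp <;> omega

lemma length_le_endPt {l : List (ℤ × ℤ)} (h : schSteps l) :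
    (l.length : ℤ) ≤ (endPt l).1 + (endPt l).2 := by
  induction l with
  | nil => simp [endPt_nil]
  | cons s l ih =>
    have hs := h s (List.mem_cons_self)
    have ih' := ih fun t ht => h t (List.mem_cons_of_mem _ ht)
    rw [endPt_cons]
    rcases hs with rfl | rfl | rfl <;> push_cast <;> simp <;> omega

lemma unit_length {l : List (ℤ × ℤ)} (h : unitSteps l) :
    (endPt l).1 + (endPt l).2 = l.length := by
  induction l with
  | nil => simp [endPt_nil]
  | cons s l ih =>
    have hs := h s (List.mem_cons_self)
    have ih' := ih fun t ht => h t (List.mem_cons_of_mem _ ht)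
    rw [endPt_cons]
    rcases hs with rfl | rfl <;> push_cast <;> simp <;> omega

end Aux2

section Aux3

/-- Height of the path above the diagonal after `i` steps. -/
def gfun (l : List (ℤ × ℤ)) (i : ℕ) : ℤ :=
  (endPt (l.take i)).2 - (endPt (l.take i)).1

lemma gfun_zero (l : List (ℤ × ℤ)) : gfun l 0 = 0 := by
  simp [gfun, endPt_nil]

lemma gfun_step {l : List (ℤ × ℤ)} (h : schSteps l) {i : ℕ} (hi : i < l.length) :
    gfun l i - 1 ≤ gfun l (i + 1) := by
  have htake : l.take (i + 1) = l.take i ++ (l.drop i).take 1 := List.take_add (l := l) (i := i) (j := 1)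
  cases hd : l.drop i with
  | nil => exfalso; have := congrArg List.length hd; simp at this; omega
  | cons s t =>
    have hs : s ∈ l := List.drop_subset i l (hd ▸ List.mem_cons_self)
    have : l.take (i + 1) = l.take i ++ [s] := by rw [htake, hd]; rfl
    rw [gfun, gfun, this, endPt_append]
    rcases h s hs with rfl | rfl | rfl <;> simp [endPt] <;> omega

lemma forced_unit : ∀ (b : List (ℤ × ℤ)) (p : ℤ × ℤ),
    okFrom (fun q => q.1 ≤ q.2) p b →
    (∀ j, 1 ≤ j → j ≤ b.length →
      p.2 + (endPt (b.take j)).2 < p.1 + (endPt (b.take j)).1) →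
    unitSteps b
  | [], _, _, _ => by intro s hs; simp at hs
  | s :: b, p, hok, hbelow => by
    have h1 := hbelow 1 le_rfl (by simp)
    simp only [List.take_succ_cons, List.take_zero] at h1
    rw [endPt_cons] at h1
    simp [endPt_nil] at h1
    have hs : s = (1, 0) ∨ s = (0, 1) := by
      rcases hok.1 with h' | h' | h'
      · exact Or.inl h'
      · exact Or.inr h'
      · exfalso
        rcases h' with ⟨rfl, hD⟩
        simp at h1
        omega
    have hrest : unitSteps b := by
      refine forced_unit b (p.1 + s.1, p.2 + s.2) hok.2 ?_
      intro j hj1 hj2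
      have := hbelow (j + 1) (by omega) (by simpa using hj2)
      simp only [List.take_succ_cons] at this
      rw [endPt_cons] at this
      simp only
      omega
    intro t ht
    rcases List.mem_cons.1 ht with rfl | ht
    · exact hs
    · exact hrest t ht

lemma decomp {n k : ℕ} (hkn : k < n) {l : List (ℤ × ℤ)} (hl : l ∈ LCS n k) :
    ∃ (m : ℕ) (a b : List (ℤ × ℤ)), m ≤ k ∧ l = a ++ b ∧ a ∈ LCS m m ∧
      unitSteps b ∧ strictBelowAfterStart b ∧
      endPt b = ((n : ℤ) - m, (k : ℤ) - m) ∧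
      ∀ (m' : ℕ) (a' b' : List (ℤ × ℤ)), l = a' ++ b' → a' ∈ LCS m' m' →
        unitSteps b' → strictBelowAfterStart b' → m' = m ∧ a' = a ∧ b' = b := by
  obtain ⟨hok, hend⟩ := hl
  have hsch : schSteps l := okFrom_schSteps hok
  set L := l.length with hL
  have hgL : gfun l L = (k : ℤ) - n := by
    rw [gfun, List.take_length, hend]
  have hgLneg : gfun l L < 0 := by
    rw [hgL]; have : (k : ℤ) < n := by exact_mod_cast hkn
    omega
  set i₀ := Nat.findGreatest (fun i => 0 ≤ gfun l i) L with hi₀def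
  have hi₀L : i₀ ≤ L := Nat.findGreatest_le L
  have hi₀P : 0 ≤ gfun l i₀ :=
    Nat.findGreatest_spec (P := fun i => 0 ≤ gfun l i) (Nat.zero_le L) (le_of_eq (gfun_zero l).symm)
  have hgt : ∀ i, i₀ < i → i ≤ L → gfun l i < 0 := by
    intro i h1 h2
    have := Nat.findGreatest_is_greatest (P := fun i => 0 ≤ gfun l i) h1 h2
    omega
  have hi₀lt : i₀ < L := by
    rcases lt_or_eq_of_le hi₀L with h' | h'
    · exact h'
    · exfalso; rw [h'] at hi₀P; omega
  have hgi₀ : gfun l i₀ = 0 := by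
    have h1 := gfun_step hsch hi₀lt
    have h2 := hgt (i₀ + 1) (by omega) (by omega)
    omega
  set a := l.take i₀ with ha_def
  set b := l.drop i₀ with hb_def
  have hab : l = a ++ b := (List.take_append_drop _ _).symm
  have hascheck : schSteps a := fun s hs => hsch s (List.take_subset _ _ hs)
  have ha_nonneg : 0 ≤ (endPt a).1 := (endPt_nonneg hascheck).1
  have ha_diag : (endPt a).2 = (endPt a).1 := by
    have : gfun l i₀ = (endPt a).2 - (endPt a).1 := rfl
    omega
  set m : ℕ := (endPt a).1.toNat with hm_def
  have hm : endPt a = ((m : ℤ), (m : ℤ)) := by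
    have h1 : ((m : ℤ)) = (endPt a).1 := Int.toNat_of_nonneg ha_nonneg
    exact Prod.ext h1.symm (by rw [ha_diag, h1])
  have hblen : b.length = L - i₀ := by rw [hb_def, List.length_drop]
  have hbtake : ∀ j, endPt (l.take (i₀ + j)) =
      ((m : ℤ) + (endPt (b.take j)).1, (m : ℤ) + (endPt (b.take j)).2) := by
    intro j
    rw [List.take_add, endPt_append, ← ha_def, ← hb_def, hm]
  have hbneg : ∀ j, 1 ≤ j → j ≤ b.length →
      (endPt (b.take j)).2 < (endPt (b.take j)).1 := by
    intro j h1 h2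
    have hg := hgt (i₀ + j) (by omega) (by omega)
    rw [gfun, hbtake j] at hg
    simp only at hg
    omega
  have hok' := okFrom_append.1 (hab ▸ hok)
  have hokb : okFrom (fun p => p.1 ≤ p.2) ((m : ℤ), (m : ℤ)) b := by
    have := hok'.2
    rw [hm] at this
    simpa using this
  have hbunit : unitSteps b := by
    refine forced_unit b _ hokb ?_
    intro j h1 h2
    have := hbneg j h1 h2
    simp only
    omega
  have hbstrict : strictBelowAfterStart b := by
    intro p hp hne
    obtain ⟨j, hj, rfl⟩ := mem_pts.1 hp
    cases j with
    | zero => exact absurd (by simp [endPt_nil]) hne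
    | succ i => exact hbneg (i + 1) (by omega) hj
  have hbend : endPt b = ((n : ℤ) - m, (k : ℤ) - m) := by
    have h1 : endPt l = ((endPt a).1 + (endPt b).1, (endPt a).2 + (endPt b).2) := by
      rw [hab] at hend ⊢; exact endPt_append a b
    rw [hend, hm] at h1
    have h2 := congrArg Prod.fst h1
    have h3 := congrArg Prod.snd h1
    simp only at h2 h3
    exact Prod.ext (by omega) (by omega)
  have hmk : m ≤ k := by
    have := (endPt_nonneg (unit_schSteps hbunit)).2
    rw [hbend] at this
    simp only at this
    omega
  refine ⟨m, a, b, hmk, hab, ⟨hok'.1, hm⟩, hbunit, hbstrict, hbend, ?_⟩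
  intro m' a' b' heq ha' hu' hs'
  have hlen' : a'.length ≤ L := by
    rw [hL, heq]; simp
  have hdrop' : l.drop a'.length = b' := by rw [heq]; exact List.drop_left
  have htake' : l.take a'.length = a' := by rw [heq]; exact List.take_left
  have hga' : gfun l a'.length = 0 := by
    rw [gfun, htake', ha'.2]
    simp
  have hle : a'.length ≤ i₀ := Nat.le_findGreatest (P := fun i => 0 ≤ gfun l i) hlen' (le_of_eq hga'.symm)
  have hkey : a'.length = i₀ := by
    by_contra hne2
    have hlt : a'.length < i₀ := lt_of_le_of_ne hle hne2
    set j := i₀ - a'.length with hj_def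
    have hj1 : 1 ≤ j := by omega
    have hj2 : j ≤ b'.length := by
      have : b'.length = L - a'.length := by rw [← hdrop', List.length_drop]
      omega
    have hpt : endPt (b'.take j) = ((m : ℤ) - m', (m : ℤ) - m') := by
      have h1 : l.take i₀ = a' ++ b'.take j := by
        have : i₀ = a'.length + j := by omega
        rw [this, List.take_add, htake', hdrop']
      have h2 : endPt (l.take i₀) = ((m : ℤ), (m : ℤ)) := hm
      rw [h1, endPt_append, ha'.2] at h2
      have h3 := congrArg Prod.fst h2
      have h4 := congrArg Prod.snd h2
      simp only at h3 h4
      exact Prod.ext (by omega) (by omega)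
    have hmem : endPt (b'.take j) ∈ pts b' :=
      mem_pts.2 ⟨j, hj2, rfl⟩
    by_cases hc : endPt (b'.take j) = ((0 : ℤ), (0 : ℤ))
    · have hunit_take : unitSteps (b'.take j) := fun s hs => hu' s (List.take_subset _ _ hs)
      have hlen_take := unit_length hunit_take
      rw [hc] at hlen_take
      simp only at hlen_take
      have : (b'.take j).length = min j b'.length := List.length_take
      omega
    · have := hs' _ hmem hc
      rw [hpt] at this
      simp at this
  have ha'a : a' = a := by rw [← htake', hkey]
  have hb'b : b' = b := by rw [← hdrop', hkey]
  refine ⟨?_, ha'a, hb'b⟩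
  have : ((m' : ℤ), (m' : ℤ)) = ((m : ℤ), (m : ℤ)) := by
    rw [← ha'.2, ha'a, hm]
  have := congrArg Prod.fst this
  simp only at this
  exact_mod_cast this

end Aux3

section Aux4

lemma finite_bddSch : ∀ N : ℕ, {l : List (ℤ × ℤ) | l.length ≤ N ∧ schSteps l}.Finite
  | 0 => by
    refine Set.Finite.subset (Set.finite_singleton []) ?_
    rintro l ⟨h1, -⟩
    simp only [Set.mem_singleton_iff]
    exact List.length_eq_zero_iff.1 (Nat.le_zero.1 h1)
  | N + 1 => by
    have hS : ({((1 : ℤ), (0 : ℤ)), ((0 : ℤ), (1 : ℤ)), ((1 : ℤ), (1 : ℤ))} :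
        Set (ℤ × ℤ)).Finite := Set.toFinite _
    refine Set.Finite.subset
      (Set.Finite.insert [] (Set.Finite.image2 List.cons hS (finite_bddSch N))) ?_
    rintro l ⟨hlen, hsch⟩
    cases l with
    | nil => exact Set.mem_insert _ _
    | cons s t =>
      refine Set.mem_insert_of_mem _ (Set.mem_image2_of_mem ?_ ?_)
      · rcases hsch s (List.mem_cons_self) with rfl | rfl | rfl <;> simp
      · exact ⟨by simp at hlen; omega, fun x hx => hsch x (List.mem_cons_of_mem _ hx)⟩

/-- The set counted by `dCount`. -/
def Dset (p q : ℕ) : Set (List (ℤ × ℤ)) :=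
  {l : List (ℤ × ℤ) |
    unitSteps l ∧ endPt l = ((p : ℤ), (q : ℤ)) ∧ strictBelowAfterStart l}

lemma dCount_eq (p q : ℕ) : dCount p q = Nat.card ↥(Dset p q) := rfl

lemma Dset_finite (p q : ℕ) : (Dset p q).Finite := by
  refine Set.Finite.subset (finite_bddSch (p + q)) ?_
  rintro l ⟨hu, hend, -⟩
  have hsch := unit_schSteps hu
  refine ⟨?_, hsch⟩
  have hle := unit_length hu
  rw [hend] at hle
  simp only at hle
  have : (l.length : ℤ) ≤ ((p + q : ℕ) : ℤ) := by push_cast; omega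
  exact_mod_cast this

lemma ncard_sigma {ι : Type} [Fintype ι] (f : ι → Type) [∀ i, Finite (f i)] :
    Nat.card ((i : ι) × f i) = ∑ i, Nat.card (f i) := by
  letI : ∀ i, Fintype (f i) := fun i => Fintype.ofFinite _
  simp [Nat.card_eq_fintype_card]

end Aux4

/-- for n > k, every path to (n,k) in L_CS decomposes uniquely into a
path to some diagonal point (m,m) followed by a path never revisiting the diagonal,
and consequently the count of paths to (n,k) equals Σ_{m=0}^{k} f_m · d_{n-m,k-m}. -/
theorem LCS_decomposition (n k : ℕ) (h : k < n) :
    (∀ l ∈ LCS n k, ∃! pr : List (ℤ × ℤ) × List (ℤ × ℤ),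
        l = pr.1 ++ pr.2 ∧ (∃ m ≤ k, pr.1 ∈ LCS m m) ∧
        unitSteps pr.2 ∧ strictBelowAfterStart pr.2) ∧
    Nat.card ↥(LCS n k) =
      ∑ m ∈ Finset.range (k + 1), fCS m * dCount (n - m) (k - m) := by
  classical
  constructor
  · intro l hl
    obtain ⟨m, a, b, hmk, hab, ha, hbu, hbs, hbe, huniq⟩ := decomp h hl
    refine ⟨(a, b), ⟨hab, ⟨m, hmk, ha⟩, hbu, hbs⟩, ?_⟩
    rintro ⟨a', b'⟩ ⟨heq, ⟨m', _, ha'⟩, hu', hs'⟩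
    obtain ⟨-, h1, h2⟩ := huniq m' a' b' heq ha' hu' hs'
    simp only [Prod.mk.injEq]
    exact ⟨h1, h2⟩
  · have key : ∀ x : (m : Fin (k + 1)) ×
        (↥(LCS m m) × ↥(Dset (n - m) (k - m))),
        (x.2.1.1 ++ x.2.2.1) ∈ LCS n k := by
      rintro ⟨m, ⟨a, hok_a, hend_a⟩, ⟨b, hu_b, hend_b, -⟩⟩
      have hmk : (m : ℕ) ≤ k := Nat.lt_succ_iff.1 m.isLt
      constructor
      · exact okFrom_append.2 ⟨hok_a, unitSteps_okFrom _ hu_b⟩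
      · dsimp only
        rw [endPt_append, hend_a, hend_b]
        have h1 : ((n - (m : ℕ) : ℕ) : ℤ) = (n : ℤ) - (m : ℕ) := by
          rw [Nat.cast_sub (by omega)]
        have h2 : ((k - (m : ℕ) : ℕ) : ℤ) = (k : ℤ) - (m : ℕ) := by
          rw [Nat.cast_sub hmk]
        simp only [h1, h2]
        exact Prod.ext (by ring) (by ring)
    set Φ : ((m : Fin (k + 1)) × (↥(LCS m m) × ↥(Dset (n - m) (k - m)))) →
        ↥(LCS n k) := fun x => ⟨x.2.1.1 ++ x.2.2.1, key x⟩ with hΦ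
    have hbij : Function.Bijective Φ := by
      constructor
      · rintro ⟨m, ⟨a, ha⟩, ⟨b, hb⟩⟩ ⟨m', ⟨a', ha'⟩, ⟨b', hb'⟩⟩ hxy
        have heq : a ++ b = a' ++ b' := congrArg Subtype.val hxy
        have hl : (a ++ b) ∈ LCS n k := key ⟨m, ⟨a, ha⟩, ⟨b, hb⟩⟩
        obtain ⟨m₀, a₀, b₀, hm₀k, hab₀, ha₀, hbu₀, hbs₀, hbe₀, huniq⟩ :=
          decomp h hl
        obtain ⟨hmm, haa, hbb⟩ := huniq m a b rfl ha hb.1 hb.2.2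
        obtain ⟨hmm', haa', hbb'⟩ := huniq m' a' b' heq ha' hb'.1 hb'.2.2
        have hm : m = m' := Fin.ext (by omega)
        subst hm
        have hA : a = a' := haa.trans haa'.symm
        have hB : b = b' := hbb.trans hbb'.symm
        subst hA; subst hB
        rfl
      · rintro ⟨l, hl⟩
        obtain ⟨m, a, b, hmk, hab, ha, hbu, hbs, hbe, -⟩ := decomp h hl
        have hbD : b ∈ Dset (n - m) (k - m) := by
          refine ⟨hbu, ?_, hbs⟩
          rw [hbe]
          have h1 : ((n - m : ℕ) : ℤ) = (n : ℤ) - m := by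
            rw [Nat.cast_sub (by omega)]
          have h2 : ((k - m : ℕ) : ℤ) = (k : ℤ) - m := by
            rw [Nat.cast_sub hmk]
          rw [h1, h2]
        refine ⟨⟨⟨m, by omega⟩, ⟨a, ha⟩, ⟨b, hbD⟩⟩, ?_⟩
        exact Subtype.ext hab.symm
    haveI h1 : ∀ m : Fin (k + 1), Finite ↥(LCS m m) :=
      fun m => (LCS_finite _ _).to_subtype
    haveI h2 : ∀ m : Fin (k + 1), Finite ↥(Dset (n - m) (k - m)) :=
      fun m => (Dset_finite _ _).to_subtype
    calc Nat.card ↥(LCS n k)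
        = Nat.card ((m : Fin (k + 1)) ×
            (↥(LCS m m) × ↥(Dset (n - m) (k - m)))) :=
          (Nat.card_congr (Equiv.ofBijective Φ hbij)).symm
      _ = ∑ m : Fin (k + 1),
            Nat.card (↥(LCS m m) × ↥(Dset (n - m) (k - m))) :=
          ncard_sigma _
      _ = ∑ m : Fin (k + 1), fCS m * dCount (n - m) (k - m) := by
          refine Finset.sum_congr rfl fun m _ => ?_
          rw [Nat.card_prod, fCS, dCount_eq]
      _ = ∑ m ∈ Finset.range (k + 1), fCS m * dCount (n - m) (k - m) :=
          Fin.sum_univ_eq_sum_range (fun m => fCS m * dCount (n - m) (k - m)) _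
end

section
/- The generating function identity S(x) = (1/(1−x))·C(x/(1−x)²) holds: for every n ≥ 0, the large Schröder number S_n equals Σ_{k=0}^{n} C_k · binom(n+k, n−k), where C_k is the k-th Catalan number. -/
open Finset PowerSeries

/-- Dual Vandermonde / hockey-stick identity. -/
lemma vander (r s : ℕ) : ∀ m : ℕ,
    ∑ j ∈ range (m + 1), Nat.choose j r * Nat.choose (m - j) s
      = Nat.choose (m + 1) (r + s + 1) := by
  intro m
  induction m generalizing s with
  | zero =>
      rcases r with _ | r <;> rcases s with _ | s <;> simp [Nat.choose]
  | succ m ih =>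
      rcases s with _ | s
      · -- s = 0
        rw [sum_range_succ]
        have h0 := ih 0
        simp only [Nat.choose_zero_right, mul_one, Nat.add_zero] at h0 ⊢
        rw [h0, Nat.choose_succ_succ (m + 1) r]
        simp only [Nat.succ_eq_add_one]
        omega
      · -- s = s + 1
        rw [sum_range_succ]
        have hz : Nat.choose (m + 1) r * Nat.choose (m + 1 - (m + 1)) (s + 1) = 0 := by
          simp
        rw [hz, add_zero]
        have h1 : ∀ j ∈ range (m + 1),
            Nat.choose j r * Nat.choose (m + 1 - j) (s + 1)
              = Nat.choose j r * Nat.choose (m - j) (s + 1)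
                + Nat.choose j r * Nat.choose (m - j) s := by
          intro j hj
          rw [mem_range] at hj
          have : m + 1 - j = (m - j) + 1 := by omega
          rw [this, Nat.choose_succ_succ (m - j) s, Nat.mul_add]
          ring
        rw [sum_congr rfl h1, sum_add_distrib, ih (s + 1), ih s,
          Nat.choose_succ_succ (m + 1), show r + (s + 1) = r + s + 1 from by omega]
        simp only [Nat.succ_eq_add_one]
        omega

lemma shifted_vander (a b n : ℕ) :
    ∑ i ∈ range (n + 1), Nat.choose (i + a) (2 * a) * Nat.choose (n - i + b) (2 * b)
      = Nat.choose (n + a + b + 1) (2 * a + 2 * b + 1) := by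
  have key := vander (2 * a) (2 * b) (n + a + b)
  -- restrict the sum on the LHS of key to j ∈ [a, n+a]
  have h0 : ∀ j ∈ range (n + a + b + 1), j ∉ (range (n + 1)).image (· + a) →
      Nat.choose j (2 * a) * Nat.choose (n + a + b - j) (2 * b) = 0 := by
    intro j hj hj'
    rw [mem_range] at hj
    simp only [mem_image, mem_range] at hj'
    by_cases hja : j < a
    · have : Nat.choose j (2 * a) = 0 := Nat.choose_eq_zero_of_lt (by omega)
      simp [this]
    · have hj2 : n + a < j := by
        by_contra h
        exact hj' ⟨j - a, by omega, by omega⟩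
      have : Nat.choose (n + a + b - j) (2 * b) = 0 :=
        Nat.choose_eq_zero_of_lt (by omega)
      simp [this]
  have hsub : (range (n + 1)).image (· + a) ⊆ range (n + a + b + 1) := by
    intro j hj; simp only [mem_image, mem_range] at hj ⊢; omega
  rw [← Finset.sum_subset hsub h0] at key
  rw [Finset.sum_image (by intro x _ y _ h; simp only at h; omega)] at key
  have : ∀ i ∈ range (n + 1),
      Nat.choose (i + a) (2 * a) * Nat.choose (n + a + b - (i + a)) (2 * b)
        = Nat.choose (i + a) (2 * a) * Nat.choose (n - i + b) (2 * b) := by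
    intro i hi; rw [mem_range] at hi
    congr 2
    omega
  rw [sum_congr rfl this] at key
  rw [key]

/-- Candidate closed form. -/
def Ts (n : ℕ) : ℕ := ∑ k ∈ range (n + 1), catalan k * Nat.choose (n + k) (2 * k)

lemma Tsplit (n : ℕ) : Ts (n + 1)
    = Ts n + ∑ k ∈ range (n + 1), catalan (k + 1) * Nat.choose (n + 1 + k) (2 * k + 1) := by
  unfold Ts
  rw [sum_range_succ' (fun k => catalan k * Nat.choose (n + 1 + k) (2 * k)) (n + 1),
    sum_range_succ' (fun k => catalan k * Nat.choose (n + k) (2 * k)) n]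
  simp only [catalan_zero, one_mul, Nat.mul_zero, Nat.choose_zero_right, Nat.add_zero]
  have h1 : ∀ k ∈ range (n + 1),
      catalan (k + 1) * Nat.choose (n + 1 + (k + 1)) (2 * (k + 1))
        = catalan (k + 1) * Nat.choose (n + (k + 1)) (2 * (k + 1))
          + catalan (k + 1) * Nat.choose (n + 1 + k) (2 * k + 1) := by
    intro k _
    have e1 : n + 1 + (k + 1) = (n + k + 1) + 1 := by omega
    have e2 : 2 * (k + 1) = (2 * k + 1) + 1 := by omega
    rw [e1, e2, Nat.choose_succ_succ (n + k + 1) (2 * k + 1), Nat.mul_add]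
    have e3 : n + (k + 1) = n + k + 1 := by omega
    have e4 : n + 1 + k = n + k + 1 := by omega
    rw [e3, e4]
    simp only [Nat.succ_eq_add_one]
    rw [show 2 * k + 1 + 1 = 2 * (k + 1) from by omega]
    ring
  rw [sum_congr rfl h1, sum_add_distrib]
  have h2 : ∑ k ∈ range (n + 1), catalan (k + 1) * Nat.choose (n + (k + 1)) (2 * (k + 1))
      = ∑ k ∈ range n, catalan (k + 1) * Nat.choose (n + (k + 1)) (2 * (k + 1)) := by
    rw [sum_range_succ]
    have : Nat.choose (n + (n + 1)) (2 * (n + 1)) = 0 :=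
      Nat.choose_eq_zero_of_lt (by omega)
    simp [this]
  rw [h2]
  ring

lemma Tconv (n : ℕ) :
    ∑ i ∈ range (n + 1), Ts i * Ts (n - i)
      = ∑ k ∈ range (n + 1), catalan (k + 1) * Nat.choose (n + 1 + k) (2 * k + 1) := by
  have hT : ∀ i, i ≤ n →
      Ts i = ∑ a ∈ range (n + 1), catalan a * Nat.choose (i + a) (2 * a) := by
    intro i hi
    unfold Ts
    apply Finset.sum_subset
    · intro a ha; rw [mem_range] at ha ⊢; omega
    · intro a ha ha'
      rw [mem_range] at ha
      rw [mem_range] at ha'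
      have : Nat.choose (i + a) (2 * a) = 0 := Nat.choose_eq_zero_of_lt (by omega)
      simp [this]
  have L : ∑ i ∈ range (n + 1), Ts i * Ts (n - i)
      = ∑ a ∈ range (n + 1), ∑ b ∈ range (n + 1),
          catalan a * catalan b * Nat.choose (n + a + b + 1) (2 * a + 2 * b + 1) := by
    calc ∑ i ∈ range (n + 1), Ts i * Ts (n - i)
        = ∑ i ∈ range (n + 1), ∑ a ∈ range (n + 1), ∑ b ∈ range (n + 1),
            catalan a * catalan b *
              (Nat.choose (i + a) (2 * a) * Nat.choose (n - i + b) (2 * b)) := by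
          apply sum_congr rfl; intro i hi; rw [mem_range] at hi
          rw [hT i (by omega), hT (n - i) (by omega), sum_mul_sum]
          apply sum_congr rfl; intro a _
          apply sum_congr rfl; intro b _
          ring
      _ = ∑ a ∈ range (n + 1), ∑ b ∈ range (n + 1), catalan a * catalan b *
            ∑ i ∈ range (n + 1),
              Nat.choose (i + a) (2 * a) * Nat.choose (n - i + b) (2 * b) := by
          rw [Finset.sum_comm]
          apply sum_congr rfl; intro a _
          rw [Finset.sum_comm]
          apply sum_congr rfl; intro b _
          rw [Finset.mul_sum]
      _ = _ := by
          apply sum_congr rfl; intro a _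
          apply sum_congr rfl; intro b _
          rw [shifted_vander]
  rw [L]
  -- now reshape the RHS
  have R : ∑ k ∈ range (n + 1), catalan (k + 1) * Nat.choose (n + 1 + k) (2 * k + 1)
      = ∑ k ∈ range (n + 1), ∑ p ∈ Finset.HasAntidiagonal.antidiagonal k,
          catalan p.1 * catalan p.2 *
            Nat.choose (n + p.1 + p.2 + 1) (2 * p.1 + 2 * p.2 + 1) := by
    apply sum_congr rfl; intro k _
    rw [catalan_succ', Finset.sum_mul]
    apply sum_congr rfl; intro p hp
    rw [Finset.HasAntidiagonal.mem_antidiagonal] at hp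
    rw [show n + 1 + k = n + p.1 + p.2 + 1 from by omega,
      show 2 * k + 1 = 2 * p.1 + 2 * p.2 + 1 from by omega]
  rw [R]
  have hbi : (range (n + 1)).biUnion Finset.HasAntidiagonal.antidiagonal
      = (range (n + 1) ×ˢ range (n + 1)).filter (fun p => p.1 + p.2 ≤ n) := by
    ext p
    simp only [Finset.mem_biUnion, Finset.HasAntidiagonal.mem_antidiagonal, Finset.mem_filter,
      Finset.mem_product, mem_range]
    constructor
    · rintro ⟨k, hk, hpk⟩; omega
    · rintro ⟨⟨h1, h2⟩, h3⟩; exact ⟨p.1 + p.2, by omega, rfl⟩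
  have hdisj : (↑(range (n + 1)) : Set ℕ).PairwiseDisjoint Finset.HasAntidiagonal.antidiagonal := by
    intro x _ y _ hxy
    simp only [Function.onFun]
    rw [Finset.disjoint_left]
    intro p hp hq
    rw [Finset.HasAntidiagonal.mem_antidiagonal] at hp hq
    omega
  rw [← Finset.sum_biUnion hdisj, hbi]
  rw [Finset.sum_filter_of_ne ?h0]
  case h0 =>
    intro p hp hne
    by_contra hle
    have : Nat.choose (n + p.1 + p.2 + 1) (2 * p.1 + 2 * p.2 + 1) = 0 :=
      Nat.choose_eq_zero_of_lt (by omega)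
    exact hne (by rw [this, Nat.mul_zero])
  rw [Finset.sum_product]

theorem schroeder_eq_Ts (n : ℕ) : schroeder n = Ts n := by
  induction n using Nat.strong_induction_on with
  | _ n ih =>
    match n with
    | 0 => simp [schroeder, Ts]
    | n + 1 =>
      rw [schroeder, Fin.sum_univ_eq_sum_range (fun i => schroeder i * schroeder (n - i))]
      rw [ih n (by omega)]
      have hs : ∑ i ∈ range (n + 1), schroeder i * schroeder (n - i)
          = ∑ i ∈ range (n + 1), Ts i * Ts (n - i) := by
        apply sum_congr rfl
        intro i hi
        rw [mem_range] at hi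
        rw [ih i (by omega), ih (n - i) (by omega)]
      rw [hs, Tconv, ← Tsplit]

/-- S_n = Σ_{k=0}^{n} C_k · binom(n+k, n−k). -/
theorem schroeder_catalan_binom (n : ℕ) :
    schroeder n = ∑ k ∈ Finset.range (n + 1), catalan k * Nat.choose (n + k) (n - k) := by
  rw [schroeder_eq_Ts]
  unfold Ts
  apply sum_congr rfl
  intro k hk
  rw [mem_range] at hk
  congr 1
  rw [show n - k = n + k - 2 * k from by omega]
  exact (Nat.choose_symm (by omega)).symm
end
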